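/- Every nonempty fiber of the Wolff state map has the same size: let S₁,…,S_{n−k} be a basis of a subspace S ≤ V = (𝔽₂²)ⁿ and 0 ≤ i ≤ n. For every v in the image fᵢ(S^⊥), the fiber C_v = {P ∈ S^⊥ : fᵢ(P) = v} has cardinality |Cᵢᵖ| · |Cᵢᶠ|; consequently |S^⊥| = Σ_{v ∈ fᵢ(S^⊥)} |C_v| = |fᵢ(S^⊥)| · |Cᵢᵖ| · |Cᵢᶠ|. -/
import Mathlib


/-- `V = (𝔽₂²)ⁿ`, the additive group underlying the effective Pauli group `Gₙ`. -/
abbrev PV (n : ℕ) := Fin n → ZMod 2 × ZMod 2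

/-- The symplectic form `ω(v,w) = Σᵢ (aᵢb′ᵢ + a′ᵢbᵢ)` over `𝔽₂`. -/
def sympOmega {n : ℕ} (v w : PV n) : ZMod 2 :=
  ∑ i, ((v i).1 * (w i).2 + (w i).1 * (v i).2)

lemma sympOmega_add_left {n : ℕ} (a b w : PV n) :
    sympOmega (a + b) w = sympOmega a w + sympOmega b w := by
  unfold sympOmega
  rw [← Finset.sum_add_distrib]
  refine Finset.sum_congr rfl fun i _ => ?_
  simp [Prod.fst_add, Prod.snd_add, add_mul, mul_add]
  ring

lemma sympOmega_smul_left {n : ℕ} (c : ZMod 2) (a w : PV n) :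
    sympOmega (c • a) w = c * sympOmega a w := by
  unfold sympOmega
  rw [Finset.mul_sum]
  refine Finset.sum_congr rfl fun i _ => ?_
  simp [Prod.smul_fst, Prod.smul_snd, smul_eq_mul]
  ring

/-- The symplectic orthogonal `S^⊥ = {P ∈ V : ω(P,Q) = 0 for all Q ∈ S}`. -/
def sPerp {n : ℕ} (S : Submodule (ZMod 2) (PV n)) : Submodule (ZMod 2) (PV n) where
  carrier := {P | ∀ Q ∈ S, sympOmega P Q = 0}
  add_mem' := by
    intro a b ha hb Q hQ
    rw [sympOmega_add_left, ha Q hQ, hb Q hQ, add_zero]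
  zero_mem' := by
    intro Q hQ
    simp [sympOmega]
  smul_mem' := by
    intro c a ha Q hQ
    rw [sympOmega_smul_left, ha Q hQ, mul_zero]

/-- The truncation map `πᵢ : V → V`, `(P₁,…,Pₙ) ↦ (P₁,…,Pᵢ,0,…,0)`. -/
def trunc (n i : ℕ) : PV n →ₗ[ZMod 2] PV n where
  toFun v := fun j => if (j : ℕ) < i then v j else 0
  map_add' := by
    intro a b
    funext j
    by_cases h : (j : ℕ) < i <;> simp [h]
  map_smul' := by
    intro c a
    funext j
    by_cases h : (j : ℕ) < i <;> simp [h]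



lemma sympOmega_comm {n : ℕ} (v w : PV n) : sympOmega v w = sympOmega w v := by
  unfold sympOmega
  exact Finset.sum_congr rfl fun i _ => by ring

lemma sympOmega_add_right {n : ℕ} (a b w : PV n) :
    sympOmega w (a + b) = sympOmega w a + sympOmega w b := by
  unfold sympOmega
  rw [← Finset.sum_add_distrib]
  refine Finset.sum_congr rfl fun i _ => ?_
  simp [Prod.fst_add, Prod.snd_add]
  ring

lemma sympOmega_sub_right {n : ℕ} (a b w : PV n) :
    sympOmega w (a - b) = sympOmega w a - sympOmega w b := by
  unfold sympOmega
  rw [← Finset.sum_sub_distrib]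
  refine Finset.sum_congr rfl fun i _ => ?_
  simp [Prod.fst_sub, Prod.snd_sub]
  ring

lemma sympOmega_smul_right {n : ℕ} (c : ZMod 2) (a w : PV n) :
    sympOmega w (c • a) = c * sympOmega w a := by
  unfold sympOmega
  rw [Finset.mul_sum]
  refine Finset.sum_congr rfl fun i _ => ?_
  simp [Prod.smul_fst, Prod.smul_snd, smul_eq_mul]
  ring

lemma sympOmega_zero_right {n : ℕ} (w : PV n) : sympOmega w 0 = 0 := by
  simp [sympOmega]

lemma trunc_idem {n : ℕ} (i : ℕ) (P : PV n) :
    trunc n i (trunc n i P) = trunc n i P := by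
  funext j
  by_cases h : (j : ℕ) < i <;> simp [trunc, h]


/-- Every nonempty fiber of the Wolff state map has the same size |Cᵢᵖ|·|Cᵢᶠ|;
consequently |S^⊥| = |fᵢ(S^⊥)| · |Cᵢᵖ| · |Cᵢᶠ|. -/
theorem wolff_state_map_fibers (n k : ℕ) (hk : k ≤ n)
    (S : Submodule (ZMod 2) (PV n))
    (Sgen : Fin (n - k) → PV n) (hind : LinearIndependent (ZMod 2) Sgen)
    (hspan : Submodule.span (ZMod 2) (Set.range Sgen) = S)
    (i : ℕ) (hi : i ≤ n) :
    (∀ s ∈ (fun (P : PV n) (j : Fin (n - k)) =>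
          sympOmega (Sgen j) (trunc n i P)) '' (sPerp S : Set (PV n)),
        Nat.card {P : PV n | P ∈ sPerp S ∧
            (fun j : Fin (n - k) => sympOmega (Sgen j) (trunc n i P)) = s}
          = Nat.card ↥(sPerp S ⊓ LinearMap.ker (LinearMap.id - trunc n i))
            * Nat.card ↥(sPerp S ⊓ LinearMap.ker (trunc n i))) ∧
    Nat.card (sPerp S)
      = Nat.card ((fun (P : PV n) (j : Fin (n - k)) =>
            sympOmega (Sgen j) (trunc n i P)) '' (sPerp S : Set (PV n)))
        * Nat.card ↥(sPerp S ⊓ LinearMap.ker (LinearMap.id - trunc n i))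
        * Nat.card ↥(sPerp S ⊓ LinearMap.ker (trunc n i)) := by

  classical
  -- abbreviations
  let F : PV n → (Fin (n - k) → ZMod 2) :=
    fun P j => sympOmega (Sgen j) (trunc n i P)
  have hFadd : ∀ P Q, F (P + Q) = F P + F Q := by
    intro P Q
    funext j
    simp only [F, map_add, sympOmega_add_right]
    rfl
  have hFsub : ∀ P Q, F (P - Q) = F P - F Q := by
    intro P Q
    funext j
    simp only [F, map_sub, sympOmega_sub_right]
    rfl
  have hSgenS : ∀ j, Sgen j ∈ S := fun j => by
    rw [← hspan]; exact Submodule.subset_span ⟨j, rfl⟩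
  -- if ω(P, Sⱼ)=0 for all j then P ∈ S^⊥
  have hKiff : ∀ P : PV n, (∀ j, sympOmega P (Sgen j) = 0) → P ∈ sPerp S := by
    intro P h Q hQ
    rw [← hspan] at hQ
    induction hQ using Submodule.span_induction with
    | mem x hx => obtain ⟨j, rfl⟩ := hx; exact h j
    | zero => exact sympOmega_zero_right P
    | add x y _ _ hx hy => rw [sympOmega_add_right, hx, hy, add_zero]
    | smul c x _ hx => rw [sympOmega_smul_right, hx, mul_zero]
  have hmemP : ∀ P : PV n, F P = 0 → trunc n i P ∈ sPerp S := by
    intro P h0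
    refine hKiff _ fun j => ?_
    rw [sympOmega_comm]
    exact congrFun h0 j
  -- membership in the past/future subgroups
  have hPmem : ∀ P : PV n,
      P ∈ sPerp S ⊓ LinearMap.ker (LinearMap.id - trunc n i) ↔
        P ∈ sPerp S ∧ trunc n i P = P := by
    intro P
    rw [Submodule.mem_inf, LinearMap.mem_ker, LinearMap.sub_apply,
      LinearMap.id_apply, sub_eq_zero, eq_comm]
  have hFmem : ∀ P : PV n,
      P ∈ sPerp S ⊓ LinearMap.ker (trunc n i) ↔
        P ∈ sPerp S ∧ trunc n i P = 0 := by
    intro P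
    rw [Submodule.mem_inf, LinearMap.mem_ker]
  -- the kernel-fiber equivalence: K ≃ Cᵖ × Cᶠ
  have eK : {P : PV n // P ∈ sPerp S ∧ F P = 0} ≃
      ↥(sPerp S ⊓ LinearMap.ker (LinearMap.id - trunc n i)) ×
      ↥(sPerp S ⊓ LinearMap.ker (trunc n i)) :=
    { toFun := fun P =>
        (⟨trunc n i P.1, (hPmem _).mpr ⟨hmemP P.1 P.2.2, trunc_idem i P.1⟩⟩,
         ⟨P.1 - trunc n i P.1,
          (hFmem _).mpr ⟨sub_mem P.2.1 (hmemP P.1 P.2.2),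
            by rw [map_sub, trunc_idem, sub_self]⟩⟩)
      invFun := fun ab =>
        ⟨ab.1.1 + ab.2.1, by
          have ha := (hPmem _).mp ab.1.2
          have hb := (hFmem _).mp ab.2.2
          refine ⟨add_mem ha.1 hb.1, ?_⟩
          funext j
          show sympOmega (Sgen j) (trunc n i (ab.1.1 + ab.2.1)) = 0
          rw [map_add, ha.2, hb.2, add_zero, sympOmega_comm]
          exact ab.1.2.1 _ (hSgenS j)⟩
      left_inv := fun P => Subtype.ext (by simp)
      right_inv := fun ab => by
        have ha := (hPmem _).mp ab.1.2
        have hb := (hFmem _).mp ab.2.2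
        refine Prod.ext (Subtype.ext ?_) (Subtype.ext ?_)
        · show trunc n i (ab.1.1 + ab.2.1) = ab.1.1
          rw [map_add, ha.2, hb.2, add_zero]
        · show (ab.1.1 + ab.2.1) - trunc n i (ab.1.1 + ab.2.1) = ab.2.1
          rw [map_add, ha.2, hb.2, add_zero, add_sub_cancel_left] }
  have hK0 : Nat.card {P : PV n // P ∈ sPerp S ∧ F P = 0}
      = Nat.card ↥(sPerp S ⊓ LinearMap.ker (LinearMap.id - trunc n i))
        * Nat.card ↥(sPerp S ⊓ LinearMap.ker (trunc n i)) := by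
    rw [Nat.card_congr eK, Nat.card_prod]
  -- all nonempty fibers have the kernel's cardinality
  have part1 : ∀ s ∈ F '' (sPerp S : Set (PV n)),
      Nat.card {P : PV n | P ∈ sPerp S ∧ F P = s}
        = Nat.card ↥(sPerp S ⊓ LinearMap.ker (LinearMap.id - trunc n i))
          * Nat.card ↥(sPerp S ⊓ LinearMap.ker (trunc n i)) := by
    rintro s ⟨P₀, hP₀, rfl⟩
    rw [← hK0]
    refine Nat.card_congr
      { toFun := fun P => ⟨P.1 - P₀, sub_mem P.2.1 hP₀,
          by rw [hFsub, P.2.2, sub_self]⟩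
        invFun := fun Q => ⟨Q.1 + P₀, add_mem Q.2.1 hP₀,
          by rw [hFadd, Q.2.2, zero_add]⟩
        left_inv := fun P => Subtype.ext (sub_add_cancel P.1 P₀)
        right_inv := fun Q => Subtype.ext (add_sub_cancel_right Q.1 P₀) }
  refine ⟨part1, ?_⟩
  -- counting: |S^⊥| = |image| * |fiber|
  let I : Set (Fin (n - k) → ZMod 2) := F '' (sPerp S : Set (PV n))
  haveI : Fintype ↥I := Fintype.ofFinite _
  haveI : ∀ b : ↥I, Fintype {a : ↥(sPerp S) // F a.1 = b.1} := fun b =>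
    Fintype.ofFinite _
  let g : ↥(sPerp S) → ↥I := fun P => ⟨F P.1, ⟨P.1, P.2, rfl⟩⟩
  have hcard : Nat.card ↥(sPerp S) = ∑ b : ↥I, Nat.card {a : ↥(sPerp S) // g a = b} := by
    rw [← Nat.card_congr (Equiv.sigmaFiberEquiv g)]
    rw [Nat.card_eq_fintype_card, Fintype.card_sigma]
    exact Finset.sum_congr rfl fun b _ => (Nat.card_eq_fintype_card).symm
  have hfib : ∀ b : ↥I, Nat.card {a : ↥(sPerp S) // g a = b}
      = Nat.card {P : PV n | P ∈ sPerp S ∧ F P = b.1} := by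
    intro b
    refine Nat.card_congr
      { toFun := fun a => ⟨a.1.1, a.1.2, congrArg Subtype.val a.2⟩
        invFun := fun P => ⟨⟨P.1, P.2.1⟩, Subtype.ext P.2.2⟩
        left_inv := fun a => Subtype.ext rfl
        right_inv := fun P => Subtype.ext rfl }
  have : Nat.card ↥(sPerp S) = Nat.card ↥I *
      (Nat.card ↥(sPerp S ⊓ LinearMap.ker (LinearMap.id - trunc n i))
        * Nat.card ↥(sPerp S ⊓ LinearMap.ker (trunc n i))) := by
    rw [hcard]
    have : ∀ b : ↥I, Nat.card {a : ↥(sPerp S) // g a = b}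
        = Nat.card ↥(sPerp S ⊓ LinearMap.ker (LinearMap.id - trunc n i))
          * Nat.card ↥(sPerp S ⊓ LinearMap.ker (trunc n i)) := fun b => by
      rw [hfib b]; exact part1 b.1 b.2
    rw [Finset.sum_congr rfl fun b _ => this b, Finset.sum_const, smul_eq_mul,
      Finset.card_univ]
    simp [Nat.card_eq_fintype_card]
  rw [this, mul_assoc]
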